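/- Let 0 < α < 1. Then there exists a unique τ in the open interval (1, 2) such that Γ(2α−τ) · Γ(τ+1) · sin(π(α−τ)) = Γ(2α) · sin(πα); moreover this unique τ satisfies 1 < τ, 2α < τ, and τ < 1 + α. (Writing τ = 1 + α_c, the number α_c depends only on α and satisfies 0 < α_c < α.) -/

import Mathlib

open Real Filter Finset Nat

-- telescoping sum lemmas
lemma sumsq_le (n : ℕ) : ∑ i ∈ Finset.range n, (1:ℝ)/((1+i)*(1+i)) ≤ 2 - 2/(n+1) := by
  induction n with
  | zero => norm_num
  | succ n ih =>
    rw [Finset.sum_range_succ]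
    have hx : (0:ℝ) < n + 1 := by positivity
    have key : (1:ℝ)/((1+n)*(1+n)) + 2/(n+2) ≤ 2/(n+1) := by
      rw [div_add_div _ _ (by positivity) (by positivity), div_le_div_iff₀ (by positivity) (by positivity)]
      ring_nf
      nlinarith [sq_nonneg ((n:ℝ))]
    push_cast
    push_cast at ih key
    have h22 : ((n:ℝ)+1+1) = (n:ℝ)+2 := by ring
    rw [h22]
    linarith

lemma sumtel_le (n : ℕ) : ∑ i ∈ Finset.range n, (1:ℝ)/((1+i)*(2+i)) ≤ 1 := by
  have : ∀ m : ℕ, ∑ i ∈ Finset.range m, (1:ℝ)/((1+i)*(2+i)) = 1 - 1/(m+1) := by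
    intro m
    induction m with
    | zero => norm_num
    | succ m ih =>
      rw [Finset.sum_range_succ, ih]
      have h1 : ((1:ℝ)+m) ≠ 0 := by positivity
      have h2 : ((2:ℝ)+m) ≠ 0 := by positivity
      push_cast
      field_simp
      ring
  rw [this n]
  have : (0:ℝ) < n+1 := by positivity
  have : (0:ℝ) ≤ 1/((n:ℝ)+1) := by positivity
  linarith

lemma prodP_pos (s : ℝ) (hs : 0 < s) (n : ℕ) :
    0 < ∏ j ∈ Finset.range (n+1), (s + (j:ℝ)) :=
  Finset.prod_pos (fun j _ => by positivity)

lemma fact_eq (a c δ : ℝ) (ha : 0 < a) (hd : 0 < a + c + δ) (j : ℕ) :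
    (a + c + j) * (a + δ + j) =
      ((a + j) * ((a + c + δ) + j)) * (1 + c*δ/((a + j) * ((a + c + δ) + j))) := by
  have h1 : (a + (j:ℝ)) ≠ 0 := by positivity
  have h2 : ((a + c + δ) + (j:ℝ)) ≠ 0 := by positivity
  field_simp
  ring

/-- Core four-point inequality with exponential slack. -/
lemma Gamma_four_le (a c δ K : ℝ) (ha : 0 < a) (hc : 0 ≤ c) (hδ : 0 ≤ δ)
    (hker : ∀ n : ℕ, ∑ j ∈ Finset.range (n+1), c*δ/((a + j) * ((a + c + δ) + j)) ≤ K) :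
    Real.Gamma (a+c+δ) * Real.Gamma a ≤ Real.Gamma (a+c) * Real.Gamma (a+δ) * Real.exp K := by
  have hd : 0 < a + c + δ := by linarith
  have hac : 0 < a + c := by linarith
  have haδ : 0 < a + δ := by linarith
  have key : ∀ n : ℕ, 1 ≤ n →
      Real.GammaSeq (a+c+δ) n * Real.GammaSeq a n ≤
      Real.GammaSeq (a+c) n * Real.GammaSeq (a+δ) n * Real.exp K := by
    intro n hn
    have hn0 : (0:ℝ) < n := by exact_mod_cast hn
    have hprod : (∏ j ∈ Finset.range (n+1), (a + c + (j:ℝ))) * (∏ j ∈ Finset.range (n+1), (a + δ + (j:ℝ)))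
        ≤ ((∏ j ∈ Finset.range (n+1), ((a:ℝ) + j)) * (∏ j ∈ Finset.range (n+1), ((a + c + δ) + (j:ℝ)))) * Real.exp K := by
      rw [← Finset.prod_mul_distrib, ← Finset.prod_mul_distrib]
      calc ∏ j ∈ Finset.range (n+1), ((a + c + (j:ℝ)) * (a + δ + j))
          = (∏ j ∈ Finset.range (n+1), ((a + (j:ℝ)) * ((a + c + δ) + j))) *
              ∏ j ∈ Finset.range (n+1), (1 + c*δ/((a + (j:ℝ)) * ((a + c + δ) + j))) := by
            rw [← Finset.prod_mul_distrib]
            exact Finset.prod_congr rfl (fun j _ => fact_eq a c δ ha hd j)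
        _ ≤ (∏ j ∈ Finset.range (n+1), ((a + (j:ℝ)) * ((a + c + δ) + j))) * Real.exp K := by
            apply mul_le_mul_of_nonneg_left _ (Finset.prod_nonneg (fun j _ => by positivity))
            calc ∏ j ∈ Finset.range (n+1), (1 + c*δ/((a + (j:ℝ)) * ((a + c + δ) + j)))
                ≤ ∏ j ∈ Finset.range (n+1), Real.exp (c*δ/((a + (j:ℝ)) * ((a + c + δ) + j))) := by
                  apply Finset.prod_le_prod (fun j _ => by positivity)
                  intro j _
                  have := Real.add_one_le_exp (c*δ/((a + (j:ℝ)) * ((a + c + δ) + j)))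
                  linarith
              _ = Real.exp (∑ j ∈ Finset.range (n+1), c*δ/((a + (j:ℝ)) * ((a + c + δ) + j))) := by
                  rw [← Real.exp_sum]
              _ ≤ Real.exp K := Real.exp_le_exp.2 (hker n)
    -- now convert to GammaSeq inequality
    have e1 : Real.GammaSeq (a+c+δ) n * Real.GammaSeq a n
        = ((n:ℝ)^(a+c+δ) * (n ! : ℝ) * ((n:ℝ)^a * (n ! : ℝ))) /
          ((∏ j ∈ Finset.range (n+1), ((a+c+δ) + (j:ℝ))) * (∏ j ∈ Finset.range (n+1), ((a:ℝ) + j))) := by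
      rw [Real.GammaSeq, Real.GammaSeq, _root_.div_mul_div_comm]
    have e2 : Real.GammaSeq (a+c) n * Real.GammaSeq (a+δ) n
        = ((n:ℝ)^(a+c+δ) * (n ! : ℝ) * ((n:ℝ)^a * (n ! : ℝ))) /
          ((∏ j ∈ Finset.range (n+1), ((a+c) + (j:ℝ))) * (∏ j ∈ Finset.range (n+1), ((a+δ) + (j:ℝ)))) := by
      rw [Real.GammaSeq, Real.GammaSeq, _root_.div_mul_div_comm]
      have hee : (n:ℝ)^(a+c) * (n:ℝ)^(a+δ) = (n:ℝ)^(a+c+δ) * (n:ℝ)^a := by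
        rw [← Real.rpow_add hn0, ← Real.rpow_add hn0]
        ring_nf
      congr 1
      rw [mul_mul_mul_comm, hee, ← mul_mul_mul_comm]
    rw [e1, e2, div_mul_eq_mul_div, div_le_div_iff₀ (by positivity)
      (mul_pos (prodP_pos _ hac n) (prodP_pos _ haδ n))]
    have hnumpos : (0:ℝ) ≤ (n:ℝ)^(a+c+δ) * (n ! : ℝ) * ((n:ℝ)^a * (n ! : ℝ)) := by positivity
    calc (n:ℝ)^(a+c+δ) * (n ! : ℝ) * ((n:ℝ)^a * (n ! : ℝ)) *
          ((∏ j ∈ Finset.range (n+1), ((a+c) + (j:ℝ))) * (∏ j ∈ Finset.range (n+1), ((a+δ) + (j:ℝ))))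
        ≤ (n:ℝ)^(a+c+δ) * (n ! : ℝ) * ((n:ℝ)^a * (n ! : ℝ)) *
          (((∏ j ∈ Finset.range (n+1), ((a:ℝ) + j)) * (∏ j ∈ Finset.range (n+1), ((a + c + δ) + (j:ℝ)))) * Real.exp K) :=
          mul_le_mul_of_nonneg_left hprod hnumpos
      _ = (n:ℝ)^(a+c+δ) * (n ! : ℝ) * ((n:ℝ)^a * (n ! : ℝ)) * Real.exp K *
          ((∏ j ∈ Finset.range (n+1), ((a+c+δ) + (j:ℝ))) * (∏ j ∈ Finset.range (n+1), ((a:ℝ) + j))) := by ring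
  have h1 : Tendsto (fun n => Real.GammaSeq (a+c+δ) n * Real.GammaSeq a n) atTop
      (nhds (Real.Gamma (a+c+δ) * Real.Gamma a)) :=
    (Real.GammaSeq_tendsto_Gamma _).mul (Real.GammaSeq_tendsto_Gamma _)
  have h2 : Tendsto (fun n => Real.GammaSeq (a+c) n * Real.GammaSeq (a+δ) n * Real.exp K) atTop
      (nhds (Real.Gamma (a+c) * Real.Gamma (a+δ) * Real.exp K)) :=
    ((Real.GammaSeq_tendsto_Gamma _).mul (Real.GammaSeq_tendsto_Gamma _)).mul tendsto_const_nhds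
  exact le_of_tendsto_of_tendsto h1 h2 (Filter.eventually_atTop.2 ⟨1, key⟩)

/-- Plain log-convexity four-point inequality. -/
lemma Gamma_four_ge (a c δ : ℝ) (ha : 0 < a) (hc : 0 ≤ c) (hδ : 0 ≤ δ) :
    Real.Gamma (a+c) * Real.Gamma (a+δ) ≤ Real.Gamma (a+c+δ) * Real.Gamma a := by
  have hd : 0 < a + c + δ := by linarith
  have hac : 0 < a + c := by linarith
  have haδ : 0 < a + δ := by linarith
  have key : ∀ n : ℕ, 1 ≤ n →
      Real.GammaSeq (a+c) n * Real.GammaSeq (a+δ) n ≤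
      Real.GammaSeq (a+c+δ) n * Real.GammaSeq a n := by
    intro n hn
    have hn0 : (0:ℝ) < n := by exact_mod_cast hn
    have hprod : (∏ j ∈ Finset.range (n+1), ((a:ℝ) + j)) * (∏ j ∈ Finset.range (n+1), ((a + c + δ) + (j:ℝ)))
        ≤ (∏ j ∈ Finset.range (n+1), (a + c + (j:ℝ))) * (∏ j ∈ Finset.range (n+1), (a + δ + (j:ℝ))) := by
      rw [← Finset.prod_mul_distrib, ← Finset.prod_mul_distrib]
      apply Finset.prod_le_prod (fun j _ => by positivity)
      intro j _
      nlinarith [mul_nonneg hc hδ]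
    have e1 : Real.GammaSeq (a+c+δ) n * Real.GammaSeq a n
        = ((n:ℝ)^(a+c+δ) * (n ! : ℝ) * ((n:ℝ)^a * (n ! : ℝ))) /
          ((∏ j ∈ Finset.range (n+1), ((a+c+δ) + (j:ℝ))) * (∏ j ∈ Finset.range (n+1), ((a:ℝ) + j))) := by
      rw [Real.GammaSeq, Real.GammaSeq, _root_.div_mul_div_comm]
    have e2 : Real.GammaSeq (a+c) n * Real.GammaSeq (a+δ) n
        = ((n:ℝ)^(a+c+δ) * (n ! : ℝ) * ((n:ℝ)^a * (n ! : ℝ))) /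
          ((∏ j ∈ Finset.range (n+1), ((a+c) + (j:ℝ))) * (∏ j ∈ Finset.range (n+1), ((a+δ) + (j:ℝ)))) := by
      rw [Real.GammaSeq, Real.GammaSeq, _root_.div_mul_div_comm]
      have hee : (n:ℝ)^(a+c) * (n:ℝ)^(a+δ) = (n:ℝ)^(a+c+δ) * (n:ℝ)^a := by
        rw [← Real.rpow_add hn0, ← Real.rpow_add hn0]
        ring_nf
      congr 1
      rw [mul_mul_mul_comm, hee, ← mul_mul_mul_comm]
    rw [e1, e2, div_le_div_iff₀ (mul_pos (prodP_pos _ hac n) (prodP_pos _ haδ n))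
      (mul_pos (prodP_pos _ hd n) (prodP_pos _ ha n))]
    have hnumpos : (0:ℝ) ≤ (n:ℝ)^(a+c+δ) * (n ! : ℝ) * ((n:ℝ)^a * (n ! : ℝ)) := by positivity
    calc (n:ℝ)^(a+c+δ) * (n ! : ℝ) * ((n:ℝ)^a * (n ! : ℝ)) *
          ((∏ j ∈ Finset.range (n+1), ((a+c+δ) + (j:ℝ))) * (∏ j ∈ Finset.range (n+1), ((a:ℝ) + j)))
        = (n:ℝ)^(a+c+δ) * (n ! : ℝ) * ((n:ℝ)^a * (n ! : ℝ)) *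
          ((∏ j ∈ Finset.range (n+1), ((a:ℝ) + j)) * (∏ j ∈ Finset.range (n+1), ((a+c+δ) + (j:ℝ)))) := by ring
      _ ≤ (n:ℝ)^(a+c+δ) * (n ! : ℝ) * ((n:ℝ)^a * (n ! : ℝ)) *
          ((∏ j ∈ Finset.range (n+1), ((a+c) + (j:ℝ))) * (∏ j ∈ Finset.range (n+1), ((a+δ) + (j:ℝ)))) :=
          mul_le_mul_of_nonneg_left hprod hnumpos
  have h1 : Tendsto (fun n => Real.GammaSeq (a+c) n * Real.GammaSeq (a+δ) n) atTop
      (nhds (Real.Gamma (a+c) * Real.Gamma (a+δ))) :=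
    (Real.GammaSeq_tendsto_Gamma _).mul (Real.GammaSeq_tendsto_Gamma _)
  have h2 : Tendsto (fun n => Real.GammaSeq (a+c+δ) n * Real.GammaSeq a n) atTop
      (nhds (Real.Gamma (a+c+δ) * Real.Gamma a)) :=
    (Real.GammaSeq_tendsto_Gamma _).mul (Real.GammaSeq_tendsto_Gamma _)
  exact le_of_tendsto_of_tendsto h1 h2 (Filter.eventually_atTop.2 ⟨1, key⟩)

noncomputable def tF (α τ : ℝ) : ℝ :=
  Real.Gamma (2*α - τ) * Real.Gamma (τ+1) * Real.sin (π*(α - τ))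

-- Jordan: 2x ≤ sin(πx) for 0 ≤ x ≤ 1/2
lemma jordan {x : ℝ} (h0 : 0 ≤ x) (h1 : x ≤ 1/2) : 2*x ≤ Real.sin (π*x) := by
  have := Real.le_sin_mul (by linarith : (0:ℝ) ≤ 2*x) (by linarith : 2*x ≤ 1)
  have e : π/2 * (2*x) = π * x := by ring
  rw [e] at this
  linarith

-- reflection identity on the strip
lemma tF_reflect (α τ : ℝ) (h1 : 2*α < τ) (h2 : τ < 1+α) (hα : 0 < α) (hα' : α < 1) :
    tF α τ * (Real.Gamma (τ+1-2*α) * Real.sin (π*(τ-2*α))) =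
      π * Real.Gamma (τ+1) * Real.sin (π*(τ-α)) := by
  have key := Real.Gamma_mul_Gamma_one_sub (2*α - τ)
  have hs : Real.sin (π*(2*α-τ)) ≠ 0 := by
    have e : π*(2*α-τ) = -(π*(τ-2*α)) := by ring
    rw [e, Real.sin_neg, neg_ne_zero]
    have : 0 < Real.sin (π*(τ-2*α)) := by
      apply Real.sin_pos_of_pos_of_lt_pi
      · have : 0 < τ - 2*α := by linarith
        positivity
      · have hlt : τ - 2*α < 1 := by linarith
        nlinarith [Real.pi_pos]
    exact ne_of_gt this
  have key2 : Real.Gamma (2*α-τ) * Real.Gamma (1-(2*α-τ)) * Real.sin (π*(2*α-τ)) = π := by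
    rw [key]
    field_simp
  have e1 : (1:ℝ)-(2*α-τ) = τ+1-2*α := by ring
  rw [e1] at key2
  have e2 : π*(τ-2*α) = -(π*(2*α-τ)) := by ring
  have e3 : π*(α-τ) = -(π*(τ-α)) := by ring
  rw [tF, e2, e3, Real.sin_neg, Real.sin_neg]
  linear_combination (Real.Gamma (τ+1) * Real.sin (π*(τ-α))) * key2

-- Ψ strictly decreasing, given the derivative bound hypothesis
lemma Psi_strictAnti (α K : ℝ) (hα : 0 < α) (hα' : α < 1)
    (hKs : ∀ τ ∈ Set.Ioo (2*α) (1+α),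
      K * (Real.sin (π*(τ-2*α)) * Real.sin (π*(τ-α))) < π * Real.sin (π*α)) :
    StrictAntiOn (fun τ => K*τ + Real.log (Real.sin (π*(τ-α))) - Real.log (Real.sin (π*(τ-2*α))))
      (Set.Ioo (2*α) (1+α)) := by
  have hsinpos : ∀ τ ∈ Set.Ioo (2*α) (1+α),
      0 < Real.sin (π*(τ-2*α)) ∧ 0 < Real.sin (π*(τ-α)) := by
    intro τ hτ
    obtain ⟨ht1, ht2⟩ := hτ
    constructor
    · apply Real.sin_pos_of_pos_of_lt_pi
      · have : 0 < τ - 2*α := by linarith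
        positivity
      · have : τ - 2*α < 1 := by linarith
        nlinarith [Real.pi_pos]
    · apply Real.sin_pos_of_pos_of_lt_pi
      · have : 0 < τ - α := by linarith
        positivity
      · have : τ - α < 1 := by linarith
        nlinarith [Real.pi_pos]
  have hder : ∀ x ∈ Set.Ioo (2*α) (1+α),
      HasDerivAt (fun τ => K*τ + Real.log (Real.sin (π*(τ-α))) - Real.log (Real.sin (π*(τ-2*α))))
        (K + (Real.sin (π*(x-α)))⁻¹ * (Real.cos (π*(x-α))*π)
           - (Real.sin (π*(x-2*α)))⁻¹ * (Real.cos (π*(x-2*α))*π)) x := by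
    intro x hx
    obtain ⟨hsu, hsv⟩ := hsinpos x hx
    have hv : HasDerivAt (fun τ : ℝ => π*(τ-α)) π x := by
      simpa using (((hasDerivAt_id x).sub_const α).const_mul π)
    have hu : HasDerivAt (fun τ : ℝ => π*(τ-2*α)) π x := by
      simpa using (((hasDerivAt_id x).sub_const (2*α)).const_mul π)
    have hsv' : HasDerivAt (fun τ : ℝ => Real.sin (π*(τ-α))) (Real.cos (π*(x-α))*π) x :=
      (Real.hasDerivAt_sin (π*(x-α))).comp (h := fun τ : ℝ => π*(τ-α)) x hv
    have hsu' : HasDerivAt (fun τ : ℝ => Real.sin (π*(τ-2*α))) (Real.cos (π*(x-2*α))*π) x :=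
      (Real.hasDerivAt_sin (π*(x-2*α))).comp (h := fun τ : ℝ => π*(τ-2*α)) x hu
    have hlv : HasDerivAt (fun τ : ℝ => Real.log (Real.sin (π*(τ-α))))
        ((Real.sin (π*(x-α)))⁻¹ * (Real.cos (π*(x-α))*π)) x := by
      have := (Real.hasDerivAt_log (ne_of_gt hsv)).comp x hsv'
      exact this.congr_deriv (by ring)
    have hlu : HasDerivAt (fun τ : ℝ => Real.log (Real.sin (π*(τ-2*α))))
        ((Real.sin (π*(x-2*α)))⁻¹ * (Real.cos (π*(x-2*α))*π)) x := by
      have := (Real.hasDerivAt_log (ne_of_gt hsu)).comp x hsu'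
      exact this.congr_deriv (by ring)
    have hk : HasDerivAt (fun τ : ℝ => K*τ) K x := by
      simpa using (hasDerivAt_id x).const_mul K
    exact (hk.add hlv).sub hlu
  apply strictAntiOn_of_deriv_neg (convex_Ioo _ _)
  · intro x hx
    exact ((hder x hx).continuousAt).continuousWithinAt
  · intro x hx
    rw [interior_Ioo] at hx
    rw [(hder x hx).deriv]
    obtain ⟨hsu, hsv⟩ := hsinpos x hx
    have hineq := hKs x hx
    have hsin_sub : Real.sin (π*(x-2*α)) * Real.cos (π*(x-α))
        - Real.cos (π*(x-2*α)) * Real.sin (π*(x-α)) = - Real.sin (π*α) := by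
      have := Real.sin_sub (π*(x-2*α)) (π*(x-α))
      have e : π*(x-2*α) - π*(x-α) = -(π*α) := by ring
      rw [e, Real.sin_neg] at this
      linarith
    have heq : K + (Real.sin (π*(x-α)))⁻¹ * (Real.cos (π*(x-α))*π)
           - (Real.sin (π*(x-2*α)))⁻¹ * (Real.cos (π*(x-2*α))*π)
        = (K * (Real.sin (π*(x-2*α)) * Real.sin (π*(x-α)))
            + π * (Real.sin (π*(x-2*α)) * Real.cos (π*(x-α))
                   - Real.cos (π*(x-2*α)) * Real.sin (π*(x-α))))
          / (Real.sin (π*(x-2*α)) * Real.sin (π*(x-α))) := by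
      have hsu0 := hsu.ne'
      have hsv0 := hsv.ne'
      rw [eq_div_iff (mul_ne_zero hsu0 hsv0)]
      linear_combination (Real.cos (π*(x-α))*π*Real.sin (π*(x-2*α))) * (inv_mul_cancel₀ hsv0)
        - (Real.cos (π*(x-2*α))*π*Real.sin (π*(x-α))) * (inv_mul_cancel₀ hsu0)
    rw [heq, hsin_sub]
    apply div_neg_of_neg_of_pos
    · linarith
    · positivity


lemma sin_pos_of_strip (α τ : ℝ) (hα : 0 < α) (hα' : α < 1) (h1 : 2*α < τ) (h2 : τ < 1+α) :
    0 < Real.sin (π*(τ-2*α)) ∧ 0 < Real.sin (π*(τ-α)) := by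
  constructor
  · apply Real.sin_pos_of_pos_of_lt_pi
    · have : 0 < τ - 2*α := by linarith
      positivity
    · have : τ - 2*α < 1 := by linarith
      nlinarith [Real.pi_pos]
  · apply Real.sin_pos_of_pos_of_lt_pi
    · have : 0 < τ - α := by linarith
      positivity
    · have : τ - α < 1 := by linarith
      nlinarith [Real.pi_pos]

set_option maxHeartbeats 1000000 in
lemma tF_strictAntiOn (α : ℝ) (hα : 0 < α) (hα' : α < 1) :
    StrictAntiOn (tF α) (Set.Ioo (2*α) (1+α)) := by
  set K : ℝ := if α ≤ 1/2 then 4*α else 2*α with hKdef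
  have hπ3 := Real.pi_gt_three
  -- derivative bound hypothesis
  have hKs : ∀ τ ∈ Set.Ioo (2*α) (1+α),
      K * (Real.sin (π*(τ-2*α)) * Real.sin (π*(τ-α))) < π * Real.sin (π*α) := by
    intro τ hτ
    obtain ⟨ht1, ht2⟩ := hτ
    obtain ⟨hsu, hsv⟩ := sin_pos_of_strip α τ hα hα' ht1 ht2
    have hsu1 : Real.sin (π*(τ-2*α)) ≤ 1 := Real.sin_le_one _
    have hsv1 : Real.sin (π*(τ-α)) ≤ 1 := Real.sin_le_one _
    by_cases hhalf : α ≤ 1/2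
    · rw [hKdef, if_pos hhalf]
      have hj : 2*α ≤ Real.sin (π*α) := jordan (le_of_lt hα) hhalf
      have hp1 : Real.sin (π*(τ-2*α)) * Real.sin (π*(τ-α)) ≤ 1 :=
        mul_le_one₀ hsu1 (le_of_lt hsv) hsv1
      have hA := mul_le_mul_of_nonneg_left hp1 (show (0:ℝ) ≤ 4*α by linarith)
      have hB := mul_le_mul_of_nonneg_left hj (le_of_lt Real.pi_pos)
      nlinarith [mul_pos (show (0:ℝ) < π - 3 by linarith) hα]
    · rw [hKdef, if_neg hhalf]
      push_neg at hhalf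
      have hj : 2*(1-α) ≤ Real.sin (π*(1-α)) := jordan (by linarith) (by linarith)
      have hsinrefl : Real.sin (π*(1-α)) = Real.sin (π*α) := by
        have e : π*(1-α) = π - π*α := by ring
        rw [e, Real.sin_pi_sub]
      rw [hsinrefl] at hj
      have hsule : Real.sin (π*(τ-2*α)) ≤ π*(τ-2*α) := Real.sin_le (by nlinarith [Real.pi_pos])
      have harg : π*(τ-2*α) < π*(1-α) := by nlinarith
      -- 2α·su·sv ≤ 2α·su < 2α·π(1-α) ≤ π·2(1-α) ≤ π·sin(πα)
      have c1 : 2*α * (Real.sin (π*(τ-2*α)) * Real.sin (π*(τ-α))) ≤ 2*α * Real.sin (π*(τ-2*α)) := by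
        nlinarith [mul_le_mul_of_nonneg_left hsv1 (mul_nonneg (by linarith : (0:ℝ) ≤ 2*α) (le_of_lt hsu))]
      have c2 : 2*α * Real.sin (π*(τ-2*α)) < 2*α * (π*(1-α)) := by nlinarith
      have c3 : 2*α * (π*(1-α)) ≤ π * (2*(1-α)) := by nlinarith [Real.pi_pos]
      have c4 : π * (2*(1-α)) ≤ π * Real.sin (π*α) := by nlinarith [Real.pi_pos]
      linarith
  have hK0 : 0 < K := by
    rw [hKdef]; split <;> linarith
  -- now the main argument
  intro τ₁ h₁ τ₂ h₂ h12
  obtain ⟨h₁l, h₁r⟩ := h₁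
  obtain ⟨h₂l, h₂r⟩ := h₂
  set δ : ℝ := τ₂ - τ₁ with hδdef
  have hδ0 : 0 < δ := by simp [hδdef]; linarith
  -- Gamma four point bound
  have hΓ : Real.Gamma (τ₂+1) * Real.Gamma (τ₁+1-2*α) ≤
      Real.Gamma (τ₁+1) * Real.Gamma (τ₂+1-2*α) * Real.exp (K*δ) := by
    have ha1 : (1:ℝ) ≤ τ₁+1-2*α := by linarith
    have hker : ∀ n : ℕ, ∑ j ∈ Finset.range (n+1),
        (2*α)*δ/(((τ₁+1-2*α) + j) * (((τ₁+1-2*α) + 2*α + δ) + j)) ≤ K*δ := by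
      intro n
      by_cases hhalf : α ≤ 1/2
      · calc ∑ j ∈ Finset.range (n+1), (2*α)*δ/(((τ₁+1-2*α) + j) * (((τ₁+1-2*α) + 2*α + δ) + j))
            ≤ ∑ j ∈ Finset.range (n+1), (2*α)*δ*((1:ℝ)/((1+j)*(1+j))) := by
              apply Finset.sum_le_sum
              intro j _
              have hj0 : (0:ℝ) ≤ (j:ℝ) := Nat.cast_nonneg j
              conv_lhs => rw [div_eq_mul_one_div]
              apply mul_le_mul_of_nonneg_left _ (by positivity : (0:ℝ) ≤ 2*α*δ)
              apply one_div_le_one_div_of_le (by positivity)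
              nlinarith [mul_le_mul (show (1:ℝ)+j ≤ τ₁+1-2*α+j by linarith)
                (show (1:ℝ)+j ≤ τ₁+1-2*α+2*α+δ+j by linarith)
                (show (0:ℝ) ≤ 1+(j:ℝ) by linarith) (show (0:ℝ) ≤ τ₁+1-2*α+j by linarith)]
          _ = (2*α)*δ * ∑ j ∈ Finset.range (n+1), (1:ℝ)/((1+j)*(1+j)) := by
              rw [Finset.mul_sum]
          _ ≤ (2*α)*δ*2 := by
              have := sumsq_le (n+1)
              have h2 : (0:ℝ) < 2/((n:ℝ)+1+1) := by positivity
              have hle : ∑ i ∈ Finset.range (n+1), (1:ℝ)/((1+i)*(1+i)) ≤ 2 := by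
                push_cast at this ⊢
                linarith
              have hnn : (0:ℝ) ≤ 2*α*δ := by positivity
              have := mul_le_mul_of_nonneg_left hle hnn
              nlinarith
          _ = K*δ := by rw [hKdef, if_pos hhalf]; ring
      · push_neg at hhalf
        have hτ₂1 : 1 ≤ τ₂ := by linarith
        calc ∑ j ∈ Finset.range (n+1), (2*α)*δ/(((τ₁+1-2*α) + j) * (((τ₁+1-2*α) + 2*α + δ) + j))
            ≤ ∑ j ∈ Finset.range (n+1), (2*α)*δ*((1:ℝ)/((1+j)*(2+j))) := by
              apply Finset.sum_le_sum
              intro j _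
              have hj0 : (0:ℝ) ≤ (j:ℝ) := Nat.cast_nonneg j
              conv_lhs => rw [div_eq_mul_one_div]
              apply mul_le_mul_of_nonneg_left _ (by positivity : (0:ℝ) ≤ 2*α*δ)
              apply one_div_le_one_div_of_le (by positivity)
              nlinarith [mul_le_mul (show (1:ℝ)+j ≤ τ₁+1-2*α+j by linarith)
                (show (2:ℝ)+j ≤ τ₁+1-2*α+2*α+δ+j by linarith)
                (show (0:ℝ) ≤ 2+(j:ℝ) by linarith) (show (0:ℝ) ≤ τ₁+1-2*α+j by linarith)]
          _ = (2*α)*δ * ∑ j ∈ Finset.range (n+1), (1:ℝ)/((1+j)*(2+j)) := by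
              rw [Finset.mul_sum]
          _ ≤ (2*α)*δ*1 := by
              have hs := sumtel_le (n+1)
              have hnn : (0:ℝ) ≤ 2*α*δ := by positivity
              have := mul_le_mul_of_nonneg_left hs hnn
              nlinarith
          _ = K*δ := by rw [hKdef, if_neg (by linarith)]; ring
    have := Gamma_four_le (τ₁+1-2*α) (2*α) δ (K*δ) (by linarith) (by linarith) (le_of_lt hδ0) hker
    have e1 : τ₁+1-2*α + 2*α = τ₁+1 := by ring
    have e2 : τ₁+1-2*α + δ = τ₂+1-2*α := by rw [hδdef]; ring
    have e3 : τ₁+1-2*α + 2*α + δ = τ₂+1 := by rw [hδdef]; ring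
    rw [e3, e1, e2] at this
    linarith
  -- sin ratio bound from Psi
  have hPsi := Psi_strictAnti α K hα hα' hKs
  have hP := hPsi ⟨h₁l, h₁r⟩ ⟨h₂l, h₂r⟩ h12
  simp only at hP
  obtain ⟨hsu₁, hsv₁⟩ := sin_pos_of_strip α τ₁ hα hα' h₁l h₁r
  obtain ⟨hsu₂, hsv₂⟩ := sin_pos_of_strip α τ₂ hα hα' h₂l h₂r
  have hsin : Real.sin (π*(τ₂-α)) * Real.sin (π*(τ₁-2*α)) * Real.exp (K*δ)
      < Real.sin (π*(τ₁-α)) * Real.sin (π*(τ₂-2*α)) := by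
    have hlog : Real.log (Real.sin (π*(τ₂-α)) * Real.sin (π*(τ₁-2*α))) + K*δ
        < Real.log (Real.sin (π*(τ₁-α)) * Real.sin (π*(τ₂-2*α))) := by
      rw [Real.log_mul (ne_of_gt hsv₂) (ne_of_gt hsu₁), Real.log_mul (ne_of_gt hsv₁) (ne_of_gt hsu₂)]
      rw [hδdef]
      nlinarith [hP]
    have := Real.exp_lt_exp.2 hlog
    rwa [Real.exp_add, Real.exp_log (by positivity), Real.exp_log (by positivity)] at this
  -- Gamma positivity
  have hG1 : 0 < Real.Gamma (τ₁+1) := Real.Gamma_pos_of_pos (by linarith)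
  have hG2 : 0 < Real.Gamma (τ₂+1) := Real.Gamma_pos_of_pos (by linarith)
  have hG1m : 0 < Real.Gamma (τ₁+1-2*α) := Real.Gamma_pos_of_pos (by linarith)
  have hG2m : 0 < Real.Gamma (τ₂+1-2*α) := Real.Gamma_pos_of_pos (by linarith)
  -- reflection identities
  have hr1 := tF_reflect α τ₁ h₁l h₁r hα hα'
  have hr2 := tF_reflect α τ₂ h₂l h₂r hα hα'
  have ht1 : tF α τ₁ = π * Real.Gamma (τ₁+1) * Real.sin (π*(τ₁-α)) /
      (Real.Gamma (τ₁+1-2*α) * Real.sin (π*(τ₁-2*α))) := by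
    rw [eq_div_iff (by positivity)]
    exact hr1
  have ht2 : tF α τ₂ = π * Real.Gamma (τ₂+1) * Real.sin (π*(τ₂-α)) /
      (Real.Gamma (τ₂+1-2*α) * Real.sin (π*(τ₂-2*α))) := by
    rw [eq_div_iff (by positivity)]
    exact hr2
  rw [ht1, ht2, div_lt_div_iff₀ (by positivity) (by positivity)]
  -- final chain
  have hπ : (0:ℝ) < π := Real.pi_pos
  calc π * Real.Gamma (τ₂+1) * Real.sin (π*(τ₂-α)) * (Real.Gamma (τ₁+1-2*α) * Real.sin (π*(τ₁-2*α)))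
      = (Real.Gamma (τ₂+1) * Real.Gamma (τ₁+1-2*α)) * (π * (Real.sin (π*(τ₂-α)) * Real.sin (π*(τ₁-2*α)))) := by ring
    _ ≤ (Real.Gamma (τ₁+1) * Real.Gamma (τ₂+1-2*α) * Real.exp (K*δ)) * (π * (Real.sin (π*(τ₂-α)) * Real.sin (π*(τ₁-2*α)))) := by
        apply mul_le_mul_of_nonneg_right hΓ (by positivity)
    _ = (Real.Gamma (τ₁+1) * Real.Gamma (τ₂+1-2*α) * π) * (Real.sin (π*(τ₂-α)) * Real.sin (π*(τ₁-2*α)) * Real.exp (K*δ)) := by ring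
    _ < (Real.Gamma (τ₁+1) * Real.Gamma (τ₂+1-2*α) * π) * (Real.sin (π*(τ₁-α)) * Real.sin (π*(τ₂-2*α))) := by
        apply mul_lt_mul_of_pos_left hsin (by positivity)
    _ = π * Real.Gamma (τ₁+1) * Real.sin (π*(τ₁-α)) * (Real.Gamma (τ₂+1-2*α) * Real.sin (π*(τ₂-2*α))) := by ring



lemma Gamma_neg_Ioo {x : ℝ} (h1 : -1 < x) (h0 : x < 0) : Real.Gamma x < 0 := by
  have hg := Real.Gamma_add_one (ne_of_lt h0)
  have hpos : 0 < Real.Gamma (x+1) := Real.Gamma_pos_of_pos (by linarith)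
  nlinarith

lemma Gamma_neg_one : Real.Gamma (-1) = 0 := by
  have hg := Real.Gamma_add_one (show (-1:ℝ) ≠ 0 by norm_num)
  norm_num at hg
  have := Real.Gamma_zero
  linarith

lemma sin_neg_Ioo {x : ℝ} (h1 : -1 < x) (h0 : x < 0) : Real.sin (π*x) < 0 := by
  have : 0 < Real.sin (π*(-x)) := by
    apply Real.sin_pos_of_pos_of_lt_pi
    · nlinarith [Real.pi_pos]
    · nlinarith [Real.pi_pos]
  have e : π*x = -(π*(-x)) := by ring
  rw [e, Real.sin_neg]
  linarith

lemma sin_pos_Ioo2 {x : ℝ} (h1 : -2 < x) (h0 : x < -1) : 0 < Real.sin (π*x) := by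
  have e : π*x = π*(x+2) - 2*π := by ring
  rw [e, Real.sin_sub_two_pi]
  apply Real.sin_pos_of_pos_of_lt_pi
  · nlinarith [Real.pi_pos]
  · nlinarith [Real.pi_pos]

lemma tF_shift (α τ : ℝ) (hτ : τ ≠ 0) (h : 2*α - τ ≠ 0) :
    τ * tF α (τ-1) = (τ - 2*α) * tF α τ := by
  have g1 : Real.Gamma (2*α-(τ-1)) = (2*α-τ) * Real.Gamma (2*α-τ) := by
    rw [show 2*α-(τ-1) = (2*α-τ)+1 by ring, Real.Gamma_add_one h]
  have g3 : Real.Gamma (τ+1) = τ * Real.Gamma τ := Real.Gamma_add_one hτ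
  have s1 : Real.sin (π*(α-(τ-1))) = -Real.sin (π*(α-τ)) := by
    rw [show π*(α-(τ-1)) = π*(α-τ)+π by ring, Real.sin_add_pi]
  unfold tF
  rw [g1, s1, show (τ-1)+1 = τ by ring, g3]
  ring

lemma tF_top (α : ℝ) : tF α (1+α) = 0 := by
  unfold tF
  rw [show π*(α-(1+α)) = -π by ring]
  simp

lemma tF_one (α : ℝ) (hne : 2*α - 1 ≠ 0) :
    (1-2*α) * tF α 1 = Real.Gamma (2*α) * Real.sin (π*α) := by
  have g1 : Real.Gamma (2*α) = (2*α-1) * Real.Gamma (2*α-1) := by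
    rw [show 2*α = (2*α-1)+1 by ring, Real.Gamma_add_one hne]
    ring_nf
  have g2 : Real.Gamma ((1:ℝ)+1) = 1 := by
    rw [show ((1:ℝ)+1) = 2 by norm_num, Real.Gamma_two]
  have s1 : Real.sin (π*(α-1)) = -Real.sin (π*α) := by
    rw [show π*(α-1) = π*α - π by ring, Real.sin_sub_pi]
  unfold tF
  rw [g2, s1, g1]
  ring

lemma tF_a0 (α : ℝ) (hhalf : 1/2 ≤ α) (hα' : α < 1) :
    Real.Gamma (2*α) * Real.sin (π*α) < tF α ((3*α+1)/2) := by
  have hα : 0 < α := by linarith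
  have hcos : 0 < Real.cos (π*α/2) := by
    apply Real.cos_pos_of_mem_Ioo
    constructor
    · nlinarith [Real.pi_pos]
    · nlinarith [Real.pi_pos]
  have hsin1 : Real.sin (π*α/2) ≤ 1 := Real.sin_le_one _
  have hG2a : 0 < Real.Gamma (2*α) := Real.Gamma_pos_of_pos (by linarith)
  have hGa1 : 0 < Real.Gamma ((α+1)/2) := Real.Gamma_pos_of_pos (by linarith)
  have hGa3 : 0 < Real.Gamma ((3*α+1)/2) := Real.Gamma_pos_of_pos (by linarith)
  -- sin double angle
  have hdouble : Real.sin (π*α) = 2 * Real.sin (π*α/2) * Real.cos (π*α/2) := by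
    have := Real.sin_two_mul (π*α/2)
    rw [show 2*(π*α/2) = π*α by ring] at this
    exact this
  -- value identity
  have g1 : Real.Gamma ((α+1)/2) = ((α-1)/2) * Real.Gamma ((α-1)/2) := by
    rw [show (α+1)/2 = ((α-1)/2)+1 by ring, Real.Gamma_add_one (by intro h; nlinarith)]
  have g3 : Real.Gamma ((3*α+3)/2) = ((3*α+1)/2) * Real.Gamma ((3*α+1)/2) := by
    rw [show (3*α+3)/2 = ((3*α+1)/2)+1 by ring, Real.Gamma_add_one (by intro h; nlinarith)]
  have s1 : Real.sin (π*(α-(3*α+1)/2)) = -Real.cos (π*α/2) := by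
    rw [show π*(α-(3*α+1)/2) = -(π*α/2 + π/2) by ring, Real.sin_neg,
      Real.sin_add_pi_div_two]
  have hval : (1-α)/2 * tF α ((3*α+1)/2)
      = Real.Gamma ((α+1)/2) * Real.Gamma ((3*α+3)/2) * Real.cos (π*α/2) := by
    unfold tF
    rw [show 2*α-(3*α+1)/2 = (α-1)/2 by ring, show (3*α+1)/2+1 = (3*α+3)/2 by ring, s1]
    linear_combination (-(Real.Gamma ((3*α+3)/2) * Real.cos (π*α/2))) * g1
  -- Gamma comparison
  have hfour := Gamma_four_ge ((α+1)/2) ((1-α)/2) ((3*α-1)/2)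
    (by linarith) (by linarith) (by linarith)
  rw [show (α+1)/2 + (1-α)/2 + (3*α-1)/2 = (3*α+1)/2 by ring,
    show (α+1)/2 + (1-α)/2 = 1 by ring, show (α+1)/2 + (3*α-1)/2 = 2*α by ring,
    Real.Gamma_one, one_mul] at hfour
  -- conclude
  have key : (1-α) * (Real.Gamma (2*α) * Real.sin (π*α)) < (1-α) * tF α ((3*α+1)/2) := by
    have hv2 : (1-α) * tF α ((3*α+1)/2)
        = 2 * (Real.Gamma ((α+1)/2) * Real.Gamma ((3*α+3)/2) * Real.cos (π*α/2)) := by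
      linarith [hval]
    rw [hv2, g3, hdouble]
    have step1 : Real.Gamma (2*α) * Real.sin (π*α/2) ≤ Real.Gamma (2*α) := by
      nlinarith
    nlinarith [mul_pos hGa1 hGa3, mul_pos (mul_pos hGa1 hGa3) hcos,
      mul_le_mul_of_nonneg_right hfour (le_of_lt hcos),
      mul_le_mul_of_nonneg_right (mul_le_mul_of_nonneg_left hsin1 (le_of_lt hG2a)) (le_of_lt hcos)]
  nlinarith [key]



lemma tF_continuousOn (α a b : ℝ) (h0 : 0 < a) (h1 : 2*α - a < 0) (h2 : -1 < 2*α - b) :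
    ContinuousOn (tF α) (Set.Icc a b) := by
  intro τ hτ
  obtain ⟨hta, htb⟩ := hτ
  apply ContinuousAt.continuousWithinAt
  have hG1 : ContinuousAt (fun τ : ℝ => Real.Gamma (2*α - τ)) τ := by
    apply ContinuousAt.comp (g := Real.Gamma)
    · apply (Real.differentiableAt_Gamma _).continuousAt
      intro m
      match m with
      | 0 => simp only [Nat.cast_zero, neg_zero]; intro h; nlinarith
      | (k+1) =>
        intro h
        have : ((k:ℝ)+1) ≥ 1 := by
          have := Nat.cast_nonneg (α := ℝ) k
          linarith
        push_cast at h
        nlinarith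
    · exact (continuous_const.sub continuous_id).continuousAt
  have hG2 : ContinuousAt (fun τ : ℝ => Real.Gamma (τ+1)) τ := by
    apply ContinuousAt.comp (g := Real.Gamma)
    · apply (Real.differentiableAt_Gamma _).continuousAt
      intro m
      intro h
      have : ((m:ℝ)) ≥ 0 := Nat.cast_nonneg m
      nlinarith
    · exact (continuous_id.add continuous_const).continuousAt
  have hG3 : ContinuousAt (fun τ : ℝ => Real.sin (π*(α - τ))) τ :=
    (Real.continuous_sin.comp (continuous_const.mul (continuous_const.sub continuous_id))).continuousAt
  exact (hG1.mul hG2).mul hG3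

lemma root_mem (α τ : ℝ) (hα : 0 < α) (hα' : α < 1) (hτ1 : 1 < τ) (hτ2 : τ < 2)
    (heq : tF α τ = Real.Gamma (2*α) * Real.sin (π*α)) : 2*α < τ ∧ τ < 1+α := by
  have hC : 0 < Real.Gamma (2*α) * Real.sin (π*α) := by
    apply mul_pos (Real.Gamma_pos_of_pos (by linarith))
    apply Real.sin_pos_of_pos_of_lt_pi (by positivity)
    nlinarith [Real.pi_pos]
  rcases lt_trichotomy τ (2*α) with hA | hB | hCase
  · -- τ < 2α : tF < 0
    exfalso
    have hg : 0 < Real.Gamma (2*α - τ) := Real.Gamma_pos_of_pos (by linarith)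
    have hg2 : 0 < Real.Gamma (τ+1) := Real.Gamma_pos_of_pos (by linarith)
    have hs : Real.sin (π*(α - τ)) < 0 := sin_neg_Ioo (by linarith) (by linarith)
    rw [tF] at heq
    nlinarith [mul_neg_of_pos_of_neg (mul_pos hg hg2) hs]
  · -- τ = 2α : tF = 0
    exfalso
    rw [tF, show 2*α - τ = 0 by linarith, Real.Gamma_zero, zero_mul, zero_mul] at heq
    linarith
  rcases lt_trichotomy τ (1+α) with hD | hE | hF
  · exact ⟨hCase, hD⟩
  · exfalso
    rw [hE, tF_top] at heq
    linarith
  rcases lt_trichotomy τ (2*α+1) with hG | hH | hI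
  · -- 1+α < τ < 2α+1 : tF < 0
    exfalso
    have hg : Real.Gamma (2*α - τ) < 0 := Gamma_neg_Ioo (by linarith) (by linarith)
    have hg2 : 0 < Real.Gamma (τ+1) := Real.Gamma_pos_of_pos (by linarith)
    have hs : 0 < Real.sin (π*(α - τ)) := sin_pos_Ioo2 (by linarith) (by linarith)
    rw [tF] at heq
    nlinarith [mul_neg_of_neg_of_pos (mul_neg_of_neg_of_pos hg hg2) hs]
  · -- τ = 2α+1 : tF = 0
    exfalso
    rw [tF, show 2*α - τ = -1 by linarith, Gamma_neg_one, zero_mul, zero_mul] at heq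
    linarith
  · -- 2α + 1 < τ < 2
    exfalso
    have h2a : 2*α < 1 := by linarith
    have hmono := tF_strictAntiOn α hα hα'
    have hm1 : τ - 1 ∈ Set.Ioo (2*α) (1+α) := by
      constructor <;> [linarith; linarith]
    have hm2 : (1:ℝ) ∈ Set.Ioo (2*α) (1+α) := by
      constructor <;> [linarith; linarith]
    have hlt : tF α 1 < tF α (τ-1) := hmono hm1 hm2 (by linarith)
    have hone := tF_one α (by intro h; linarith)
    have hshift := tF_shift α τ (by intro h; linarith) (by intro h; linarith)
    rw [heq] at hshift
    -- τ * tF α (τ-1) = (τ - 2α) * C,  tF α 1 = C/(1-2α),  tF(τ-1) > tF 1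
    -- so (τ-2α) C / τ > C/(1-2α)  i.e.  (τ-2α)(1-2α) > τ : contradiction
    have hτpos : (0:ℝ) < τ := by linarith
    have h1m : (0:ℝ) < 1 - 2*α := by linarith
    have e3 : (τ*(1-2*α)) * tF α 1 < (τ*(1-2*α)) * tF α (τ-1) :=
      mul_lt_mul_of_pos_left hlt (mul_pos hτpos h1m)
    have hfin : 0 < Real.Gamma (2*α) * Real.sin (π*α) * (2*α*(1+τ-2*α)) :=
      mul_pos hC (by nlinarith)
    nlinarith [e3, hone, hshift, hfin]
  done

/-- For `0 < α < 1`, the transcendental equation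
`Γ(2α−τ)·Γ(τ+1)·sin(π(α−τ)) = Γ(2α)·sin(πα)` has a unique solution `τ` in `(1, 2)`,
and this unique solution satisfies `1 < τ`, `2α < τ` and `τ < 1 + α`. -/


theorem existsUnique_root_transcendental_eq
    (α : ℝ) (hα : 0 < α) (hα' : α < 1) :
    (∃! τ : ℝ, τ ∈ Set.Ioo (1 : ℝ) 2 ∧
        Real.Gamma (2 * α - τ) * Real.Gamma (τ + 1) * Real.sin (Real.pi * (α - τ)) =
          Real.Gamma (2 * α) * Real.sin (Real.pi * α)) ∧
      ∀ τ : ℝ, τ ∈ Set.Ioo (1 : ℝ) 2 →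
        Real.Gamma (2 * α - τ) * Real.Gamma (τ + 1) * Real.sin (Real.pi * (α - τ)) =
          Real.Gamma (2 * α) * Real.sin (Real.pi * α) →
        1 < τ ∧ 2 * α < τ ∧ τ < 1 + α := by
  have hC : 0 < Real.Gamma (2*α) * Real.sin (π*α) := by
    apply mul_pos (Real.Gamma_pos_of_pos (by linarith))
    apply Real.sin_pos_of_pos_of_lt_pi (by positivity)
    nlinarith [Real.pi_pos]
  have hex : ∃ ζ, (ζ ∈ Set.Ioo (1:ℝ) 2) ∧ ζ ∈ Set.Ioo (2*α) (1+α) ∧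
      tF α ζ = Real.Gamma (2*α) * Real.sin (π*α) := by
    by_cases hhalf : α < 1/2
    · have hcont := tF_continuousOn α 1 (1+α) one_pos (by linarith) (by linarith)
      have hive := intermediate_value_Ioo' (by linarith : (1:ℝ) ≤ 1+α) hcont
      have hone := tF_one α (by intro h; linarith)
      have htF1pos : 0 < tF α 1 := by nlinarith [hC, hone]
      have htF1 : Real.Gamma (2*α) * Real.sin (π*α) < tF α 1 := by
        nlinarith [mul_pos hα htF1pos, hone]
      have hmem : Real.Gamma (2*α)*Real.sin (π*α) ∈ Set.Ioo (tF α (1+α)) (tF α 1) := by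
        rw [tF_top]; exact ⟨hC, htF1⟩
      obtain ⟨ζ, hζmem, hζeq⟩ := hive hmem
      obtain ⟨hz1, hz2⟩ := hζmem
      exact ⟨ζ, ⟨hz1, by linarith⟩, ⟨by linarith, hz2⟩, hζeq⟩
    · push_neg at hhalf
      have ha0 : (3*α+1)/2 ≤ 1+α := by linarith
      have hcont := tF_continuousOn α ((3*α+1)/2) (1+α) (by linarith) (by linarith) (by linarith)
      have hive := intermediate_value_Ioo' ha0 hcont
      have hmem : Real.Gamma (2*α)*Real.sin (π*α) ∈
          Set.Ioo (tF α (1+α)) (tF α ((3*α+1)/2)) := by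
        rw [tF_top]; exact ⟨hC, tF_a0 α hhalf hα'⟩
      obtain ⟨ζ, hζmem, hζeq⟩ := hive hmem
      obtain ⟨hz1, hz2⟩ := hζmem
      exact ⟨ζ, ⟨by linarith, by linarith⟩, ⟨by linarith, hz2⟩, hζeq⟩
  obtain ⟨ζ, hζ12, hζmemI, hζeq⟩ := hex
  have hstmt : ∀ τ : ℝ, Real.Gamma (2 * α - τ) * Real.Gamma (τ + 1) *
      Real.sin (Real.pi * (α - τ)) = tF α τ := fun τ => rfl
  constructor
  · refine ⟨ζ, ⟨hζ12, by rw [hstmt]; exact hζeq⟩, ?_⟩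
    rintro y ⟨hy12, hyeq⟩
    rw [hstmt] at hyeq
    have hymem := root_mem α y hα hα' hy12.1 hy12.2 hyeq
    exact (tF_strictAntiOn α hα hα').injOn ⟨hymem.1, hymem.2⟩ hζmemI (hyeq.trans hζeq.symm)
  · rintro τ hτ heq
    rw [hstmt] at heq
    have := root_mem α τ hα hα' hτ.1 hτ.2 heq
    exact ⟨hτ.1, this.1, this.2⟩
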